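/- Let G be a graph that has three pairwise distinct non-backtracking walks of the same length h, all from a vertex v to a vertex u. Then G has a nontrivial closed walk of length at most 6h that traverses each edge a net zero number of times and does not reduce to the trivial walk; consequently Abl(G) ≤ 6h. -/

import Mathlib

/-- A multigraph: vertices, edges, and tail/head maps (loops and parallel
edges allowed). -/
structure MGraph where
  V : Type
  E : Type
  tail : E → V
  head : E → V

namespace MGraph

variable (G : MGraph)

/-- Directed edges: an edge together with an orientation. -/
abbrev Dir := G.E × Bool

/-- The tail of a directed edge. -/
def dtail : G.Dir → G.V := fun d => if d.2 then G.tail d.1 else G.head d.1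

/-- The head of a directed edge. -/
def dhead : G.Dir → G.V := fun d => if d.2 then G.head d.1 else G.tail d.1

/-- The inverse (reversal) of a directed edge. -/
def dinv : G.Dir → G.Dir := fun d => (d.1, !d.2)

/-- A walk is a list of directed edges in which the head of each directed edge
is the tail of the next one. -/
def IsWalk (w : List G.Dir) : Prop :=
  w.Chain' (fun a b => G.dhead a = G.dtail b)

/-- A walk is non-backtracking if no directed edge is immediately followed by
its inverse. -/
def NonBack (w : List G.Dir) : Prop :=
  w.Chain' (fun a b => b ≠ G.dinv a)

/-- The starting vertex of a (nonempty) walk. -/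
def wstart (w : List G.Dir) : Option G.V := w.head?.map G.dtail

/-- The terminating vertex of a (nonempty) walk. -/
def wend (w : List G.Dir) : Option G.V := w.getLast?.map G.dhead

/-- A walk is closed if it is nontrivial and its endpoints coincide. -/
def Closed (w : List G.Dir) : Prop := w ≠ [] ∧ G.wstart w = G.wend w

/-- The number of times the directed edge `d` is traversed by the walk `w`. -/
noncomputable def cnt (w : List G.Dir) (d : G.Dir) : ℕ :=
  letI := Classical.decEq G.Dir
  w.count d

/-- A walk is edge neutral if it traverses each edge the same number of times
in each direction. -/
def EdgeNeutral (w : List G.Dir) : Prop :=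
  ∀ e : G.E, G.cnt w (e, true) = G.cnt w (e, false)

/-- The girth: the minimal length of a nontrivial closed non-backtracking
walk (`⊤` if none exists). -/
noncomputable def girth : ℕ∞ :=
  sInf {n : ℕ∞ | ∃ w : List G.Dir,
    G.IsWalk w ∧ G.NonBack w ∧ G.Closed w ∧ n = w.length}

/-- The abelian girth: the minimal length of a nontrivial closed
non-backtracking edge-neutral walk (`⊤` if none exists). -/
noncomputable def ablGirth : ℕ∞ :=
  sInf {n : ℕ∞ | ∃ w : List G.Dir,
    G.IsWalk w ∧ G.NonBack w ∧ G.Closed w ∧ G.EdgeNeutral w ∧ n = w.length}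

/-- The degree of a vertex: the number of directed edges with tail `v`
(so a loop contributes 2). -/
noncomputable def deg (v : G.V) : ℕ := Nat.card {d : G.Dir // G.dtail d = v}

/-- Adjacency via a directed edge. -/
def adj (u v : G.V) : Prop := ∃ d : G.Dir, G.dtail d = u ∧ G.dhead d = v

/-- A graph is connected if it is nonempty and any two vertices are joined by
a walk. -/
def Connected : Prop :=
  Nonempty G.V ∧ ∀ u v : G.V, Relation.ReflTransGen G.adj u v

/-- The Euler characteristic `|V| - |E|`. -/
noncomputable def eulerChar : ℤ := (Nat.card G.V : ℤ) - (Nat.card G.E : ℤ)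

/-- A walk traverses each edge at most once (in either direction). -/
def EdgesDistinct (w : List G.Dir) : Prop :=
  ∀ e : G.E, G.cnt w (e, true) + G.cnt w (e, false) ≤ 1

/-- The edge `e` occurs in the walk `w` (in some direction). -/
def edgeIn (w : List G.Dir) (e : G.E) : Prop := (e, true) ∈ w ∨ (e, false) ∈ w

/-- The vertex `x` is visited by the walk `w`. -/
def vtxIn (w : List G.Dir) (x : G.V) : Prop :=
  (∃ d ∈ w, G.dtail d = x) ∨ (∃ d ∈ w, G.dhead d = x)

/-- A cycle based at `v`: a nontrivial strongly closed non-backtracking walk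
from `v` to `v` traversing each edge at most once. -/
def IsCycleAt (v : G.V) (w : List G.Dir) : Prop :=
  G.IsWalk w ∧ G.NonBack w ∧ G.wstart w = some v ∧ G.wend w = some v ∧
    G.EdgesDistinct w ∧
    (∀ a b : G.Dir, w.head? = some a → w.getLast? = some b → a ≠ G.dinv b)

/-- A path from `u` to `v`: a non-backtracking walk from `u` to `v`
traversing each edge at most once. -/
def IsPathBetween (u v : G.V) (w : List G.Dir) : Prop :=
  G.IsWalk w ∧ G.NonBack w ∧ G.wstart w = some u ∧ G.wend w = some v ∧
    G.EdgesDistinct w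

/-- One elementary reduction step on a walk: deleting a reversal, i.e. an
adjacent pair consisting of a directed edge and its inverse. -/
def RStep (w w' : List G.Dir) : Prop :=
  ∃ (pre suf : List G.Dir) (d : G.Dir),
    w = pre ++ d :: G.dinv d :: suf ∧ w' = pre ++ suf

end MGraph

open List FreeGroup

namespace AblAux
variable {α : Type}

/-- inverse of a letter -/
abbrev inv1 (x : α × Bool) : α × Bool := (x.1, !x.2)

/-- reduced word -/
def Reduced (L : List (α × Bool)) : Prop := L.Chain' (fun a b => b ≠ inv1 a)

lemma inv1_inv1 (x : α × Bool) : inv1 (inv1 x) = x := by cases x with | mk a b => simp [inv1]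

lemma inv1_ne (x : α × Bool) : inv1 x ≠ x := by
  cases x with | mk a b => simp [inv1]

lemma inv1_eq_iff {x y : α × Bool} : inv1 x = y ↔ x = inv1 y := by
  constructor <;> rintro rfl
  · exact (inv1_inv1 x).symm
  · exact inv1_inv1 y

lemma reduced_reduce_eq_self [DecidableEq α] {L : List (α × Bool)} (h : Reduced L) :
    reduce L = L := by
  induction L with
  | nil => rfl
  | cons x L ih =>
    have hL : Reduced L := h.tail
    rw [reduce.cons, ih hL]
    cases L with
    | nil => rfl
    | cons y t =>
      have hxy : y ≠ inv1 x := (List.isChain_cons_cons.1 h).1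
      have : ¬ (x.1 = y.1 ∧ x.2 = !y.2) := by
        rintro ⟨h1, h2⟩
        exact hxy (by apply Prod.ext <;> simp [h1, h2])
      simp [this]

lemma reduced_reduce [DecidableEq α] (L : List (α × Bool)) : Reduced (reduce L) := by
  rw [Reduced, List.Chain', List.isChain_iff_getElem]
  intro i hi
  by_contra hcon
  have hlen : i + 2 <= (reduce L).length := by omega
  have hdecomp : reduce L = (reduce L).take i ++
      (reduce L)[i] :: (reduce L)[i+1] :: (reduce L).drop (i+2) := by
    conv_lhs => rw [← List.take_append_drop i (reduce L)]
    rw [List.drop_eq_getElem_cons (by omega), List.drop_eq_getElem_cons (by omega)]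
  have hget : ((reduce L)[i+1]'(by omega)) = inv1 ((reduce L)[i]'(by omega)) := by
    simpa [List.get_eq_getElem] using hcon
  rw [hget] at hdecomp
  exact reduce.not hdecomp


lemma invRev_append' (L₁ L₂ : List (α × Bool)) :
    invRev (L₁ ++ L₂) = invRev L₂ ++ invRev L₁ := by
  simp [invRev]

lemma invRev_singleton (x : α × Bool) : invRev [x] = [inv1 x] := by
  simp [invRev, inv1]

lemma invRev_nil' : invRev ([] : List (α × Bool)) = [] := rfl

lemma invRev_reduced {L : List (α × Bool)} (h : Reduced L) : Reduced (invRev L) := by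
  classical
  have h1 : reduce (invRev L) = invRev L := by
    rw [reduce_invRev, reduced_reduce_eq_self h]
  rw [← h1]
  exact reduced_reduce _

lemma invRev_ne_nil {L : List (α × Bool)} (h : L ≠ []) : invRev L ≠ [] := by
  simp [invRev, h]

lemma head?_invRev (L : List (α × Bool)) : (invRev L).head? = L.getLast?.map inv1 := by
  rw [invRev, List.head?_reverse, List.getLast?_map]

lemma getLast?_invRev (L : List (α × Bool)) : (invRev L).getLast? = L.head?.map inv1 := by
  rw [invRev, List.getLast?_reverse, List.head?_map]

lemma norm_mk_reduced [DecidableEq α] {L : List (α × Bool)} (h : Reduced L) :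
    FreeGroup.norm (mk L) = L.length := by
  rw [FreeGroup.norm, toWord_mk, reduced_reduce_eq_self h]

lemma reduced_append {X Y : List (α × Bool)} (hX : Reduced X) (hY : Reduced Y)
    (hj : ∀ a ∈ X.getLast?, ∀ b ∈ Y.head?, b ≠ inv1 a) : Reduced (X ++ Y) :=
  List.isChain_append.2 ⟨hX, hY, hj⟩

lemma reduced_append_iff {X Y : List (α × Bool)} :
    Reduced (X ++ Y) ↔ Reduced X ∧ Reduced Y ∧
      (∀ a ∈ X.getLast?, ∀ b ∈ Y.head?, b ≠ inv1 a) :=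
  List.isChain_append

/-- Decomposition of the product of two reduced words. -/
lemma decomp : ∀ (n : ℕ) (P Q : List (α × Bool)), P.length ≤ n → Reduced P → Reduced Q →
    ∃ U V Rr, P = U ++ Rr ∧ Q = invRev Rr ++ V ∧ Reduced (U ++ V) := by
  intro n
  induction n with
  | zero =>
    intro P Q hlen hRP hRQ
    have : P = [] := List.length_eq_zero_iff.1 (Nat.le_zero.1 hlen)
    subst this
    exact ⟨[], Q, [], by simp, by simp [invRev_nil'], by simpa using hRQ⟩
  | succ n ih =>
    intro P Q hlen hRP hRQ
    by_cases hred : Reduced (P ++ Q)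
    · exact ⟨P, Q, [], by simp, by simp [invRev_nil'], hred⟩
    · have hj : ¬ (∀ a ∈ P.getLast?, ∀ b ∈ Q.head?, b ≠ inv1 a) := by
        intro hjj
        exact hred (reduced_append hRP hRQ hjj)
      push_neg at hj
      obtain ⟨a, ha, b, hb, hab⟩ := hj
      subst hab
      have hPne : P ≠ [] := by rintro rfl; simp at ha
      have hQne : Q ≠ [] := by rintro rfl; simp at hb
      have hPdec : P.dropLast ++ [a] = P := List.dropLast_append_getLast? a ha
      have hQhead : Q.head hQne = inv1 a := by
        have h1 := List.head?_eq_head hQne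
        rw [h1, Option.mem_def, Option.some.injEq] at hb
        exact hb
      have hQdec : Q = inv1 a :: Q.tail := by
        conv_lhs => rw [← List.cons_head_tail hQne]
        rw [hQhead]
      have hlen' : P.dropLast.length ≤ n := by
        have h1 : P.dropLast.length = P.length - 1 := List.length_dropLast
        have h2 : 1 ≤ P.length := List.length_pos_iff.2 hPne
        omega
      have hRP' : Reduced P.dropLast := hRP.prefix ⟨[a], hPdec⟩
      have hRQ' : Reduced Q.tail := hRQ.tail
      obtain ⟨U, V, Rr, h1, h2, h3⟩ := ih P.dropLast Q.tail hlen' hRP' hRQ'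
      refine ⟨U, V, Rr ++ [a], ?_, ?_, h3⟩
      · rw [← hPdec, h1, List.append_assoc]
      · rw [invRev_append', invRev_singleton, hQdec, h2]
        simp

/-- Cyclic reduction. -/
lemma cyc : ∀ (n : ℕ) (T : List (α × Bool)), T.length ≤ n → Reduced T →
    ∃ S R, T = S ++ R ++ invRev S ∧ Reduced (R ++ R) ∧ (T ≠ [] → R ≠ []) := by
  intro n
  induction n with
  | zero =>
    intro T hlen _
    have : T = [] := List.length_eq_zero_iff.1 (Nat.le_zero.1 hlen)
    subst this
    exact ⟨[], [], by simp [invRev_nil'], by simp [Reduced, List.Chain'], by simp⟩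
  | succ n ih =>
    intro T hlen hRT
    rcases T with _ | ⟨x, T'⟩
    · exact ⟨[], [], by simp [invRev_nil'], by simp [Reduced, List.Chain'], by simp⟩
    rcases eq_nil_or_concat' T' with rfl | ⟨M, y, rfl⟩
    · refine ⟨[], [x], by simp [invRev_nil'], ?_, by simp⟩
      refine reduced_append (by simp [Reduced, List.Chain']) (by simp [Reduced, List.Chain']) ?_
      simp only [List.getLast?_singleton, List.head?_cons]
      rintro a ha b hb
      simp only [Option.mem_def, Option.some.injEq] at ha hb
      subst ha; subst hb
      intro h
      exact inv1_ne x (by rw [← h])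
    · by_cases hxy : y = inv1 x
      · have hMne : M ≠ [] := by
          rintro rfl
          have := (List.isChain_cons_cons.1 hRT).1
          simp at this
          exact this hxy
        have hlenM : M.length ≤ n := by
          have : (x :: (M ++ [y])).length = M.length + 2 := by simp
          omega
        have hRM : Reduced M := hRT.infix ⟨[x], [y], by simp⟩
        obtain ⟨S', R, hM, hRR, hne⟩ := ih M hlenM hRM
        refine ⟨x :: S', R, ?_, hRR, fun _ => hne hMne⟩
        rw [hxy, hM]
        simp [invRev, List.reverse_append]
      · refine ⟨[], x :: (M ++ [y]), by simp [invRev_nil'], ?_, by simp⟩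
        refine reduced_append hRT hRT ?_
        rintro a ha b hb
        simp only [List.head?_cons, Option.mem_def, Option.some.injEq] at hb
        subst hb
        have hlast : (x :: (M ++ [y])).getLast? = some y := by
          rw [List.getLast?_cons, List.getLast?_append]
          simp
        rw [hlast, Option.mem_def, Option.some.injEq] at ha
        subst ha
        intro h
        exact hxy (inv1_eq_iff.2 h).symm

/-- word powers -/
def wpow (R : List (α × Bool)) (k : ℕ) : List (α × Bool) := (List.replicate k R).flatten

lemma wpow_zero (R : List (α × Bool)) : wpow R 0 = [] := rfl

lemma wpow_succ (R : List (α × Bool)) (k : ℕ) : wpow R (k+1) = R ++ wpow R k := by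
  simp [wpow, List.replicate_succ]

lemma mk_wpow (R : List (α × Bool)) (k : ℕ) : mk (wpow R k) = (mk R)^k :=
  (pow_mk k).symm

lemma wpow_length (R : List (α × Bool)) (k : ℕ) : (wpow R k).length = k * R.length := by
  induction k with
  | zero => simp [wpow_zero]
  | succ k ih => rw [wpow_succ]; simp [ih]; ring

lemma wpow_ne_nil {R : List (α × Bool)} (hR : R ≠ []) (k : ℕ) : wpow R (k+1) ≠ [] := by
  intro h
  have h1 : (wpow R (k+1)).length = 0 := by rw [h]; rfl
  rw [wpow_length] at h1
  rcases Nat.mul_eq_zero.1 h1 with h' | h'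
  · omega
  · exact hR (List.length_eq_zero_iff.1 h')

lemma head?_wpow_succ (R : List (α × Bool)) (k : ℕ) (hR : R ≠ []) :
    (wpow R (k+1)).head? = R.head? := by
  rw [wpow_succ, List.head?_append, List.head?_eq_head hR]
  simp

lemma getLast?_wpow_succ (R : List (α × Bool)) (k : ℕ) (hR : R ≠ []) :
    (wpow R (k+1)).getLast? = R.getLast? := by
  induction k with
  | zero => rw [wpow_succ, wpow_zero]; simp
  | succ k ih =>
    rw [wpow_succ, List.getLast?_append, ih]
    simp

lemma junction_of_reduced {X Y : List (α × Bool)} (h : Reduced (X ++ Y)) :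
    ∀ a ∈ X.getLast?, ∀ b ∈ Y.head?, b ≠ inv1 a :=
  (reduced_append_iff.1 h).2.2

lemma reduced_wpow {R : List (α × Bool)} (hRR : Reduced (R ++ R)) :
    ∀ k, Reduced (wpow R k) := by
  intro k
  by_cases hR : R = []
  · subst hR
    have : wpow ([] : List (α × Bool)) k = [] := by
      rw [← List.length_eq_zero_iff, wpow_length]; simp
    rw [this]; simp [Reduced, List.Chain']
  induction k with
  | zero => simp [wpow_zero, Reduced, List.Chain']
  | succ k ih =>
    rw [wpow_succ]
    refine reduced_append (reduced_append_iff.1 hRR).1 ih ?_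
    rcases k with _ | k
    · simp [wpow_zero]
    · rw [head?_wpow_succ R k hR]
      exact junction_of_reduced hRR

/-- the assembled word is reduced -/
lemma reduced_assembly {S R U V : List (α × Bool)} (hSR : Reduced (S ++ R))
    (hRR : Reduced (R ++ R)) (hR : R ≠ []) (hU : U ≠ []) (hUR : U.head? = R.head?)
    (hUV : Reduced (U ++ V)) (k : ℕ) :
    Reduced ((S ++ wpow R k) ++ (U ++ V)) := by
  have hRS : Reduced S := (reduced_append_iff.1 hSR).1
  have hjSR := junction_of_reduced hSR
  have hjRR := junction_of_reduced hRR
  refine reduced_append ?_ hUV ?_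
  · refine reduced_append hRS (reduced_wpow hRR k) ?_
    rcases k with _ | k
    · simp [wpow_zero]
    · rw [head?_wpow_succ R k hR]
      exact hjSR
  · intro a ha b hb
    have hbU : (U ++ V).head? = U.head? := by
      rw [List.head?_append, List.head?_eq_head hU]
      simp
    have hb' : b ∈ R.head? := by
      rw [← hUR, ← hbU]
      exact hb
    rcases k with _ | k
    · rw [List.getLast?_append] at ha
      simp only [wpow_zero, List.getLast?_nil, Option.none_or] at ha
      exact hjSR a ha b hb'
    · rw [List.getLast?_append, getLast?_wpow_succ R k hR,
        List.getLast?_eq_getLast hR] at ha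
      have ha2 : R.getLast hR = a := Option.some.inj ha
      subst ha2
      exact hjRR _ (List.getLast?_eq_getLast hR) b hb'

/-- main norm formula for positive powers -/
lemma POS [DecidableEq α] {S R W₀ : List (α × Bool)} (hSR : Reduced (S ++ R))
    (hRR : Reduced (R ++ R)) (hR : R ≠ []) (hW : Reduced W₀) (hpre : ¬ invRev R <+: W₀) :
    ∃ U E V, R = U ++ E ∧ W₀ = invRev E ++ V ∧ U ≠ [] ∧
      ∀ m : ℕ, FreeGroup.norm (mk S * (mk R)^(m+1) * mk W₀) =
        S.length + m * R.length + U.length + V.length := by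
  have hRred : Reduced R := (reduced_append_iff.1 hSR).2.1
  obtain ⟨U, V, E, hRUE, hWEV, hUV⟩ := decomp R.length R W₀ le_rfl hRred hW
  have hUne : U ≠ [] := by
    rintro rfl
    rw [List.nil_append] at hRUE
    subst hRUE
    exact hpre ⟨V, hWEV.symm⟩
  refine ⟨U, E, V, hRUE, hWEV, hUne, ?_⟩
  intro m
  have hUR : U.head? = R.head? := by
    rw [hRUE, List.head?_append, List.head?_eq_head hUne]
    simp
  have hred := reduced_assembly hSR hRR hR hUne hUR hUV m
  have h1 : mk R * mk W₀ = mk U * mk V := by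
    rw [hRUE, hWEV, ← mul_mk, ← mul_mk, ← inv_mk]
    group
  have hmk : mk ((S ++ wpow R m) ++ (U ++ V)) = mk S * (mk R)^(m+1) * mk W₀ := by
    rw [← mul_mk, ← mul_mk, ← mul_mk, mk_wpow, ← h1, pow_succ]
    group
  rw [← hmk, norm_mk_reduced hred]
  simp [List.length_append, wpow_length]
  ring

/-- peeling powers of R from the front of a reduced word -/
lemma peel : ∀ (n : ℕ) (R W : List (α × Bool)), W.length ≤ n → R ≠ [] → Reduced W →
    ∃ (j : ℤ) (W₀ : List (α × Bool)), Reduced W₀ ∧ mk W = (mk R)^j * mk W₀ ∧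
      ¬ R <+: W₀ ∧ ¬ invRev R <+: W₀ := by
  intro n
  induction n with
  | zero =>
    intro R W hlen hR hW
    have : W = [] := List.length_eq_zero_iff.1 (Nat.le_zero.1 hlen)
    subst this
    exact ⟨0, [], by simp [Reduced, List.Chain'], by simp, fun h => hR (List.prefix_nil.1 h),
      fun h => invRev_ne_nil hR (List.prefix_nil.1 h)⟩
  | succ n ih =>
    intro R W hlen hR hW
    by_cases h1 : R <+: W
    · obtain ⟨W₁, rfl⟩ := h1
      have hlen' : W₁.length ≤ n := by
        have : 1 ≤ R.length := List.length_pos_iff.2 hR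
        rw [List.length_append] at hlen
        omega
      obtain ⟨j, W₀, hW₀, hmk, hp1, hp2⟩ :=
        ih R W₁ hlen' hR (reduced_append_iff.1 hW).2.1
      refine ⟨j + 1, W₀, hW₀, ?_, hp1, hp2⟩
      rw [← mul_mk, hmk, ← mul_assoc, ← zpow_one_add (mk R) j]
      ring_nf
    · by_cases h2 : invRev R <+: W
      · obtain ⟨W₁, rfl⟩ := h2
        have hlen' : W₁.length ≤ n := by
          have : 1 ≤ (invRev R).length := List.length_pos_iff.2 (invRev_ne_nil hR)
          rw [List.length_append] at hlen
          omega
        obtain ⟨j, W₀, hW₀, hmk, hp1, hp2⟩ :=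
          ih R W₁ hlen' hR (reduced_append_iff.1 hW).2.1
        refine ⟨j - 1, W₀, hW₀, ?_, hp1, hp2⟩
        rw [← mul_mk, hmk, ← mul_assoc, ← inv_mk, ← zpow_neg_one,
          ← zpow_add (mk R) (-1) j]
        ring_nf
      · exact ⟨0, W, hW, by simp, h1, h2⟩

/-- the main metric lemma: the norm of `t^k * A` cannot take the same value at
three distinct exponents. -/
lemma MAIN [DecidableEq α] (t A : FreeGroup α) (ht : t ≠ 1) (k₁ k₂ k₃ : ℤ)
    (h12 : k₁ < k₂) (h23 : k₂ < k₃) (c : ℕ)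
    (e1 : FreeGroup.norm (t^k₁ * A) = c) (e2 : FreeGroup.norm (t^k₂ * A) = c)
    (e3 : FreeGroup.norm (t^k₃ * A) = c) : False := by
  have hTred : Reduced (toWord t) := by
    have := reduced_reduce (L := toWord t)
    rwa [reduce_toWord] at this
  have hTne : toWord t ≠ [] := fun h => ht (toWord_eq_nil_iff.1 h)
  obtain ⟨S, R, hT, hRR, hne⟩ := cyc (toWord t).length (toWord t) le_rfl hTred
  have hRne : R ≠ [] := hne hTne
  have hRlen : 1 ≤ R.length := List.length_pos_iff.2 hRne
  have hSR : Reduced (S ++ R) := hTred.prefix ⟨invRev S, hT.symm⟩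
  have hRS : Reduced S := (reduced_append_iff.1 hSR).1
  have hRred : Reduced R := (reduced_append_iff.1 hSR).2.1
  have hjRR := junction_of_reduced hRR
  have hSiR : Reduced (S ++ invRev R) := by
    refine reduced_append hRS (invRev_reduced hRred) ?_
    intro a ha b hb
    rw [head?_invRev, List.getLast?_eq_getLast hRne, Option.map_some] at hb
    have hb' : b = inv1 (R.getLast hRne) := (Option.some.inj hb).symm
    have hSne : S ≠ [] := by rintro rfl; simp at ha
    have hjT := junction_of_reduced (X := S ++ R) (Y := invRev S) (by rwa [hT] at hTred)
    have h1 : (S ++ R).getLast? = some (R.getLast hRne) := by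
      rw [List.getLast?_append, List.getLast?_eq_getLast hRne]
      rfl
    have h2 : (invRev S).head? = some (inv1 (S.getLast hSne)) := by
      rw [head?_invRev, List.getLast?_eq_getLast hSne, Option.map_some]
    have h3 := hjT _ h1 _ h2
    -- h3 : inv1 (S.getLast hSne) ≠ inv1 (R.getLast hRne)
    have ha' : a = S.getLast hSne := by
      rw [List.getLast?_eq_getLast hSne] at ha
      exact (Option.some.inj ha).symm
    subst ha'
    subst hb'
    intro hcon
    exact h3 (by rw [hcon])
  have hiRiR : Reduced (invRev R ++ invRev R) := by
    have := invRev_reduced hRR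
    rwa [invRev_append'] at this
  obtain ⟨j, W₀, hW₀red, hmkW, hp1, hp2⟩ :=
    peel (toWord ((mk S)⁻¹ * A)).length R (toWord ((mk S)⁻¹ * A)) le_rfl hRne
      (by have := reduced_reduce (L := toWord ((mk S)⁻¹ * A)); rwa [reduce_toWord] at this)
  have htconj : t = mk S * mk R * (mk S)⁻¹ := by
    conv_lhs => rw [← mk_toWord (x := t), hT]
    rw [← mul_mk, ← mul_mk, ← inv_mk]
  have key : ∀ k : ℤ, t^k * A = mk S * (mk R)^(k+j) * mk W₀ := by
    intro k
    have hconjpow : t^k = mk S * (mk R)^k * (mk S)⁻¹ := by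
      rw [htconj]
      calc (mk S * mk R * (mk S)⁻¹)^k = (MulAut.conj (mk S) (mk R))^k := by
            rw [MulAut.conj_apply]
        _ = MulAut.conj (mk S) ((mk R)^k) := (map_zpow _ _ _).symm
        _ = mk S * (mk R)^k * (mk S)⁻¹ := by rw [MulAut.conj_apply]
    have hSA : (mk S)⁻¹ * A = (mk R)^j * mk W₀ := by
      rw [← hmkW, mk_toWord]
    have step : t^k * A = mk S * ((mk R)^k * ((mk S)⁻¹ * A)) := by
      rw [hconjpow]
      group
    rw [step, hSA, zpow_add]
    group
  obtain ⟨U, E, V, hRUE, hWEV, hUne, hF1⟩ := POS hSR hRR hRne hW₀red hp2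
  obtain ⟨U₂, E₂, V₂, hRUE₂, hWEV₂, hUne₂, hF2⟩ :=
    POS hSiR hiRiR (invRev_ne_nil hRne) hW₀red (by rwa [invRev_invRev])
  have normPos : ∀ m : ℤ, 1 ≤ m → FreeGroup.norm (mk S * (mk R)^m * mk W₀) =
      S.length + (m.toNat - 1) * R.length + U.length + V.length := by
    intro m hm
    have h2 : (mk R)^m = (mk R)^(((m.toNat - 1) + 1 : ℕ)) := by
      rw [← zpow_natCast]
      congr 1
      omega
    rw [h2]
    exact hF1 (m.toNat - 1)
  have normNeg : ∀ m : ℤ, m ≤ -1 → FreeGroup.norm (mk S * (mk R)^m * mk W₀) =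
      S.length + ((-m).toNat - 1) * R.length + U₂.length + V₂.length := by
    intro m hm
    have h2 : (mk R)^m = (mk (invRev R))^((((-m).toNat - 1) + 1 : ℕ)) := by
      rw [← inv_mk, ← zpow_natCast, inv_zpow']
      congr 1
      omega
    rw [h2]
    have := hF2 ((-m).toNat - 1)
    rwa [invRev_length] at this
  have norm0 : FreeGroup.norm (mk S * (mk R)^(0:ℤ) * mk W₀) ≤ S.length + W₀.length := by
    rw [zpow_zero, mul_one, mul_mk]
    calc FreeGroup.norm (mk (S ++ W₀)) ≤ (S ++ W₀).length := norm_mk_le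
      _ = S.length + W₀.length := List.length_append
  rw [key k₁] at e1
  rw [key k₂] at e2
  rw [key k₃] at e3
  set m₁ := k₁ + j with hm₁
  set m₂ := k₂ + j with hm₂
  set m₃ := k₃ + j with hm₃
  have hlt12 : m₁ < m₂ := by omega
  have hlt23 : m₂ < m₃ := by omega
  have hm2le : m₂ ≤ 0 := by
    by_contra hcon
    push_neg at hcon
    have q2 := normPos m₂ (by omega)
    have q3 := normPos m₃ (by omega)
    rw [e2] at q2
    rw [e3] at q3
    have hmul : (m₂.toNat - 1) * R.length < (m₃.toNat - 1) * R.length :=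
      (Nat.mul_lt_mul_right (List.length_pos_iff.2 hRne)).2 (by omega)
    omega
  have hm2ge : 0 ≤ m₂ := by
    by_contra hcon
    push_neg at hcon
    have q1 := normNeg m₁ (by omega)
    have q2 := normNeg m₂ (by omega)
    rw [e1] at q1
    rw [e2] at q2
    have hmul : ((-m₂).toNat - 1) * R.length < ((-m₁).toNat - 1) * R.length :=
      (Nat.mul_lt_mul_right (List.length_pos_iff.2 hRne)).2 (by omega)
    omega
  have hm20 : m₂ = 0 := le_antisymm hm2le hm2ge
  rw [hm20] at e2
  have q0 : c ≤ S.length + W₀.length := by rw [← e2]; exact norm0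
  have q3 := normPos m₃ (by omega)
  rw [e3] at q3
  have q1 := normNeg m₁ (by omega)
  rw [e1] at q1
  by_cases hE : E = []
  · subst hE
    rw [List.append_nil] at hRUE
    rw [invRev_nil', List.nil_append] at hWEV
    have : U.length = R.length := by rw [hRUE]
    have : V.length = W₀.length := by rw [hWEV]
    omega
  · by_cases hE₂ : E₂ = []
    · subst hE₂
      rw [List.append_nil] at hRUE₂
      rw [invRev_nil', List.nil_append] at hWEV₂
      have hU2 : U₂.length = R.length := by rw [← hRUE₂, invRev_length]
      have hV2 : V₂.length = W₀.length := by rw [hWEV₂]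
      omega
    · -- both nonempty: head clash
      have hEne := hE
      have hlastE : E.getLast? = some (R.getLast hRne) := by
        have : R.getLast? = E.getLast? := by
          rw [hRUE, List.getLast?_append, List.getLast?_eq_getLast hE]
          rfl
        rw [← this, List.getLast?_eq_getLast hRne]
      have h1 : W₀.head? = some (inv1 (R.getLast hRne)) := by
        rw [hWEV, List.head?_append, head?_invRev, hlastE, Option.map_some]
        rfl
      have hlastE₂ : E₂.getLast? = some (inv1 (R.head (by exact hRne))) := by
        have : (invRev R).getLast? = E₂.getLast? := by
          rw [hRUE₂, List.getLast?_append, List.getLast?_eq_getLast hE₂]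
          rfl
        rw [← this, getLast?_invRev, List.head?_eq_head hRne, Option.map_some]
      have h2 : W₀.head? = some (R.head hRne) := by
        rw [hWEV₂, List.head?_append, head?_invRev, hlastE₂, Option.map_some,
          inv1_inv1]
        rfl
      rw [h1] at h2
      have hclash : inv1 (R.getLast hRne) = R.head hRne := Option.some.inj h2
      exact hjRR _ (List.getLast?_eq_getLast hRne) _
        (List.head?_eq_head hRne) hclash.symm

/-- commuting elements of a free group have a common root -/
lemma exists_common_power {Gp : Type*} [Group Gp] [IsFreeGroup Gp] (p q : Gp)
    (hpq : p * q = q * p) : ∃ t : Gp, (∃ m : ℤ, p = t^m) ∧ (∃ n : ℤ, q = t^n) := by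
  classical
  set H := Subgroup.closure ({p, q} : Set Gp) with hHdef
  have hp : p ∈ H := Subgroup.subset_closure (by simp)
  have hq : q ∈ H := Subgroup.subset_closure (by simp)
  have key : ∀ y ∈ H, Commute p y ∧ Commute q y := by
    intro y hy
    induction hy using Subgroup.closure_induction with
    | mem g hg =>
      simp only [Set.mem_insert_iff, Set.mem_singleton_iff] at hg
      rcases hg with h | h
      · rw [h]
        exact ⟨Commute.refl p, hpq.symm⟩
      · rw [h]
        exact ⟨hpq, Commute.refl q⟩
    | one => exact ⟨Commute.one_right p, Commute.one_right q⟩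
    | mul x y _ _ hx hy => exact ⟨hx.1.mul_right hy.1, hx.2.mul_right hy.2⟩
    | inv x _ hx => exact ⟨hx.1.inv_right, hx.2.inv_right⟩
  have keyall : ∀ x ∈ H, ∀ y ∈ H, Commute x y := by
    intro x hx
    induction hx using Subgroup.closure_induction with
    | mem g hg =>
      intro y hy
      simp only [Set.mem_insert_iff, Set.mem_singleton_iff] at hg
      rcases hg with h | h
      · rw [h]
        exact (key y hy).1
      · rw [h]
        exact (key y hy).2
    | one => exact fun y _ => Commute.one_left y
    | mul a b _ _ ha hb => exact fun y hy => (ha y hy).mul_left (hb y hy)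
    | inv a _ ha => exact fun y hy => (ha y hy).inv_left
  have hcommH : ∀ x y : H, x * y = y * x := by
    intro x y
    have := keyall x x.2 y y.2
    exact Subtype.ext this
  let e := IsFreeGroup.mulEquiv H
  set X := IsFreeGroup.Generators H with hXdef
  have hXsub : Subsingleton X := by
    by_contra hcon
    rw [not_subsingleton_iff_nontrivial] at hcon
    obtain ⟨a, b, hab⟩ := hcon.exists_pair_ne
    set σ : Equiv.Perm (Fin 3) := Equiv.swap 0 1 with hσ
    set τ : Equiv.Perm (Fin 3) := Equiv.swap 1 2 with hτ
    set f : X → Equiv.Perm (Fin 3) := fun x => if x = a then σ else τ with hf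
    have hc : FreeGroup.of a * FreeGroup.of b = FreeGroup.of b * FreeGroup.of a := by
      apply e.injective
      rw [_root_.map_mul, _root_.map_mul]
      exact hcommH _ _
    have hc2 := congrArg (FreeGroup.lift f) hc
    rw [_root_.map_mul, _root_.map_mul, FreeGroup.lift_apply_of, FreeGroup.lift_apply_of] at hc2
    rw [hf] at hc2
    simp only [if_pos rfl, if_neg (Ne.symm hab)] at hc2
    rw [hσ, hτ] at hc2
    revert hc2
    decide
  by_cases hXe : Nonempty X
  · obtain ⟨x₀⟩ := hXe
    have hcyc : ∀ z : FreeGroup X, ∃ k : ℤ, z = (FreeGroup.of x₀)^k := by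
      intro z
      induction z using FreeGroup.induction_on with
      | C1 => exact ⟨0, by simp⟩
      | of x => exact ⟨1, by rw [Subsingleton.elim x₀ x]; simp⟩
      | inv_of x hx =>
        obtain ⟨k, hk⟩ := hx
        exact ⟨-k, by rw [hk]; simp⟩
      | mul x y hx hy =>
        obtain ⟨k, hk⟩ := hx
        obtain ⟨l, hl⟩ := hy
        exact ⟨k + l, by rw [hk, hl, zpow_add]⟩
    refine ⟨↑(e (FreeGroup.of x₀)), ?_, ?_⟩
    · obtain ⟨k, hk⟩ := hcyc (e.symm ⟨p, hp⟩)
      refine ⟨k, ?_⟩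
      have h1 : (⟨p, hp⟩ : H) = (e (FreeGroup.of x₀))^k := by
        conv_lhs => rw [← e.apply_symm_apply (⟨p, hp⟩ : H), hk]
        rw [_root_.map_zpow]
      have h2 := congrArg (Subtype.val) h1
      rwa [SubgroupClass.coe_zpow] at h2
    · obtain ⟨k, hk⟩ := hcyc (e.symm ⟨q, hq⟩)
      refine ⟨k, ?_⟩
      have h1 : (⟨q, hq⟩ : H) = (e (FreeGroup.of x₀))^k := by
        conv_lhs => rw [← e.apply_symm_apply (⟨q, hq⟩ : H), hk]
        rw [_root_.map_zpow]
      have h2 := congrArg (Subtype.val) h1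
      rwa [SubgroupClass.coe_zpow] at h2
  · have hsub : ∀ z : FreeGroup X, z = 1 := by
      intro z
      induction z using FreeGroup.induction_on with
      | C1 => rfl
      | of x => exact absurd ⟨x⟩ hXe
      | inv_of x hx => rw [hx]; simp
      | mul x y hx hy => rw [hx, hy]; simp
    have hH : ∀ h : H, h = 1 := by
      intro h
      have := hsub (e.symm h)
      have h2 := congrArg e this
      rwa [e.apply_symm_apply, _root_.map_one] at h2
    refine ⟨1, ⟨0, ?_⟩, ⟨0, ?_⟩⟩
    · have := congrArg Subtype.val (hH ⟨p, hp⟩)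
      simpa using this
    · have := congrArg Subtype.val (hH ⟨q, hq⟩)
      simpa using this

/-- MAIN without ordering assumptions -/
lemma MAIN3 [DecidableEq α] (t A : FreeGroup α) (ht : t ≠ 1) (a b c : ℤ)
    (hab : a ≠ b) (hac : a ≠ c) (hbc : b ≠ c) (n : ℕ)
    (ea : FreeGroup.norm (t^a * A) = n) (eb : FreeGroup.norm (t^b * A) = n)
    (ec : FreeGroup.norm (t^c * A) = n) : False := by
  rcases lt_trichotomy a b with h1 | h1 | h1
  · rcases lt_trichotomy b c with h2 | h2 | h2
    · exact MAIN t A ht a b c h1 h2 n ea eb ec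
    · exact absurd h2 hbc
    · rcases lt_trichotomy a c with h3 | h3 | h3
      · exact MAIN t A ht a c b h3 h2 n ea ec eb
      · exact absurd h3 hac
      · exact MAIN t A ht c a b h3 h1 n ec ea eb
  · exact absurd h1 hab
  · rcases lt_trichotomy a c with h2 | h2 | h2
    · exact MAIN t A ht b a c h1 h2 n eb ea ec
    · exact absurd h2 hac
    · rcases lt_trichotomy b c with h3 | h3 | h3
      · exact MAIN t A ht b c a h3 h2 n eb ec ea
      · exact absurd h3 hbc
      · exact MAIN t A ht c b a h3 h1 n ec eb ea

end AblAux


namespace MGraph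

variable (G : MGraph)

lemma dhead_dinv (d : G.Dir) : G.dhead (G.dinv d) = G.dtail d := by
  rcases d with ⟨e, b⟩
  cases b <;> rfl

lemma dtail_dinv (d : G.Dir) : G.dtail (G.dinv d) = G.dhead d := by
  rcases d with ⟨e, b⟩
  cases b <;> rfl

lemma nonback_iff_reduced (w : List G.Dir) : G.NonBack w ↔ AblAux.Reduced w :=
  Iff.rfl

lemma rstep_iff (w w' : List G.Dir) : G.RStep w w' ↔ FreeGroup.Red.Step w w' := by
  constructor
  · rintro ⟨pre, suf, d, rfl, rfl⟩
    exact FreeGroup.Red.Step.not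
  · intro hstep
    cases hstep with
    | not => exact ⟨_, _, (_, _), rfl, rfl⟩

lemma red_iff (w w' : List G.Dir) :
    Relation.ReflTransGen G.RStep w w' ↔ FreeGroup.Red w w' :=
  ⟨Relation.ReflTransGen.mono (fun a b => (G.rstep_iff a b).1) w w',
   Relation.ReflTransGen.mono (fun a b => (G.rstep_iff a b).2) w w'⟩

lemma isWalk_append {a b : List G.Dir} (ha : G.IsWalk a) (hb : G.IsWalk b)
    {y : G.V} (hae : G.wend a = some y) (hbs : G.wstart b = some y) :
    G.IsWalk (a ++ b) := by
  rw [IsWalk, List.Chain', List.isChain_append]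
  refine ⟨ha, hb, ?_⟩
  intro x hx z hz
  rw [Option.mem_def] at hx hz
  rw [wend, hx, Option.map_some] at hae
  rw [wstart, hz, Option.map_some] at hbs
  rw [Option.some.inj hae, Option.some.inj hbs]

lemma wstart_append {a : List G.Dir} (b : List G.Dir) (ha : a ≠ []) :
    G.wstart (a ++ b) = G.wstart a := by
  rw [wstart, wstart, List.head?_append, List.head?_eq_head ha]
  rfl

lemma wend_append (a : List G.Dir) {b : List G.Dir} (hb : b ≠ []) :
    G.wend (a ++ b) = G.wend b := by
  rw [wend, wend, List.getLast?_append, List.getLast?_eq_getLast hb]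
  rfl

lemma isWalk_invRev {w : List G.Dir} (hw : G.IsWalk w) :
    G.IsWalk (FreeGroup.invRev w) := by
  rw [IsWalk, FreeGroup.invRev, List.Chain', List.isChain_reverse, List.isChain_map]
  refine List.IsChain.imp ?_ hw
  intro a b hab
  show G.dhead (G.dinv b) = G.dtail (G.dinv a)
  rw [dhead_dinv, dtail_dinv]
  exact hab.symm

lemma wstart_invRev (w : List G.Dir) :
    G.wstart (FreeGroup.invRev w) = G.wend w := by
  rw [wstart, wend, AblAux.head?_invRev, Option.map_map]
  congr 1
  funext d
  show G.dtail (G.dinv d) = G.dhead d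
  exact G.dtail_dinv d

lemma wend_invRev (w : List G.Dir) :
    G.wend (FreeGroup.invRev w) = G.wstart w := by
  rw [wend, wstart, AblAux.getLast?_invRev, Option.map_map]
  congr 1
  funext d
  show G.dhead (G.dinv d) = G.dtail d
  exact G.dhead_dinv d

lemma cnt_append (a b : List G.Dir) (d : G.Dir) :
    G.cnt (a ++ b) d = G.cnt a d + G.cnt b d := by
  letI := Classical.decEq G.Dir
  unfold cnt
  exact List.count_append

lemma cnt_invRev (w : List G.Dir) (e : G.E) (b : Bool) :
    G.cnt (FreeGroup.invRev w) (e, b) = G.cnt w (e, !b) := by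
  unfold cnt
  letI := Classical.decEq G.Dir
  rw [FreeGroup.invRev, List.count_reverse]
  have h1 : ((e, b) : G.Dir) = (fun g : G.E × Bool => (g.1, !g.2)) (e, !b) := by simp
  have hinj : Function.Injective (fun g : G.E × Bool => (g.1, !g.2)) := by
    intro x y hxy
    have h2 := congrArg (fun g : G.E × Bool => (g.1, !g.2)) hxy
    simpa using h2
  rw [h1]
  exact List.count_map_of_injective _ _ hinj _

/-- invariant preservation along a single reduction step -/
lemma step_preserve {x₀ : G.V} {X : FreeGroup G.E} (hX : X ≠ 1)
    {w w' : List G.Dir} (hstep : FreeGroup.Red.Step w w')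
    (hw : G.IsWalk w ∧ G.wstart w = some x₀ ∧ G.wend w = some x₀ ∧
      G.EdgeNeutral w ∧ FreeGroup.mk w = X) :
    G.IsWalk w' ∧ G.wstart w' = some x₀ ∧ G.wend w' = some x₀ ∧
      G.EdgeNeutral w' ∧ FreeGroup.mk w' = X := by
  obtain ⟨hwalk, hstart, hend, hneutral, hmk⟩ := hw
  cases hstep with
  | @not L₁ L₂ x b =>
    have hmk' : FreeGroup.mk (L₁ ++ L₂) = X := by
      rw [← hmk]
      have : Quot.mk FreeGroup.Red.Step (L₁ ++ (x, b) :: (x, !b) :: L₂) =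
          Quot.mk FreeGroup.Red.Step (L₁ ++ L₂) :=
        Quot.sound FreeGroup.Red.Step.not
      rw [FreeGroup.quot_mk_eq_mk, FreeGroup.quot_mk_eq_mk] at this
      exact this.symm
    have hL₂ne_of : ¬ (L₁ = [] ∧ L₂ = []) := by
      rintro ⟨rfl, rfl⟩
      rw [FreeGroup.mk] at hmk'
      exact hX (by rw [← hmk']; rfl)
    -- decompose the walk structure
    rw [IsWalk, List.Chain', List.isChain_append] at hwalk
    obtain ⟨hw1, hw2, hj⟩ := hwalk
    have hmid : G.dhead ((x, b) : G.Dir) = G.dtail ((x, !b) : G.Dir) :=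
      (List.isChain_cons_cons.1 hw2).1
    have hw2' : List.Chain' (fun a b => G.dhead a = G.dtail b) ((x, !b) :: L₂) :=
      (List.isChain_cons_cons.1 hw2).2
    have hw3 : G.IsWalk L₂ := hw2'.tail
    have hj2 : ∀ z ∈ L₂.head?, G.dhead ((x, !b) : G.Dir) = G.dtail z :=
      (List.isChain_cons.1 hw2').1
    have hd2 : G.dhead ((x, !b) : G.Dir) = G.dtail ((x, b) : G.Dir) := by
      cases b <;> rfl
    refine ⟨?_, ?_, ?_, ?_, hmk'⟩
    · rw [IsWalk, List.Chain', List.isChain_append]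
      refine ⟨hw1, hw3, ?_⟩
      intro a ha z hz
      have h1 := hj a ha ((x, b)) (by rfl)
      have h2 := hj2 z hz
      rw [h1, ← hd2, h2]
    · rcases L₁ with _ | ⟨d₀, L₁'⟩
      · have hL₂ : L₂ ≠ [] := fun h => hL₂ne_of ⟨rfl, h⟩
        rw [List.nil_append]
        rw [List.nil_append] at hstart
        rw [wstart, List.head?_eq_head hL₂, Option.map_some]
        rw [wstart] at hstart
        simp only [List.head?_cons, Option.map_some] at hstart
        have h2 := hj2 _ (List.head?_eq_head hL₂)
        rw [← h2, hd2]
        exact hstart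
      · rw [G.wstart_append _ (by simp)]
        rw [G.wstart_append _ (by simp)] at hstart
        exact hstart
    · rcases List.eq_nil_or_concat' L₂ with rfl | ⟨M, d₁, rfl⟩
      · have hL₁ : L₁ ≠ [] := fun h => hL₂ne_of ⟨h, rfl⟩
        rw [List.append_nil]
        rw [wend, List.getLast?_eq_getLast (by simp) , Option.map_some] at hend
        simp only [List.getLast_append] at hend
        rw [wend, List.getLast?_eq_getLast hL₁, Option.map_some]
        have h1 := hj _ (List.getLast?_eq_getLast hL₁) ((x, b)) (by rfl)
        rw [h1, ← hd2]
        exact hend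
      · rw [G.wend_append _ (by simp)]
        rw [show (x, b) :: (x, !b) :: (M ++ [d₁]) =
          ((x, b) :: (x, !b) :: M) ++ [d₁] by simp] at hend
        rw [← List.append_assoc] at hend
        rw [G.wend_append _ (by simp)] at hend
        rw [G.wend_append _ (by simp)]
        exact hend
    · intro e
      have hco := hneutral e
      rw [show L₁ ++ (x, b) :: (x, !b) :: L₂ = L₁ ++ [(x, b), (x, !b)] ++ L₂ by simp]
        at hco
      rw [G.cnt_append, G.cnt_append, G.cnt_append, G.cnt_append] at hco
      rw [G.cnt_append, G.cnt_append]
      have hpair : G.cnt [(x, b), (x, !b)] (e, true) = G.cnt [(x, b), (x, !b)] (e, false) := by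
        unfold cnt
        letI := Classical.decEq G.Dir
        by_cases hex : e = x
        · subst hex
          cases b <;> simp [List.count_cons, List.count_nil]
        · have h1 : ¬ (((x, b) : G.Dir) = (e, true)) := by
            intro hcon; exact hex (congrArg Prod.fst hcon).symm
          have h2 : ¬ (((x, !b) : G.Dir) = (e, true)) := by
            intro hcon; exact hex (congrArg Prod.fst hcon).symm
          have h3 : ¬ (((x, b) : G.Dir) = (e, false)) := by
            intro hcon; exact hex (congrArg Prod.fst hcon).symm
          have h4 : ¬ (((x, !b) : G.Dir) = (e, false)) := by
            intro hcon; exact hex (congrArg Prod.fst hcon).symm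
          have e1 : (((x, b) : G.Dir) == (e, true)) = false := decide_eq_false h1
          have e2 : (((x, !b) : G.Dir) == (e, true)) = false := decide_eq_false h2
          have e3 : (((x, b) : G.Dir) == (e, false)) = false := decide_eq_false h3
          have e4 : (((x, !b) : G.Dir) == (e, false)) = false := decide_eq_false h4
          simp [List.count_cons, e1, e2, e3, e4]
      omega

lemma red_preserve {x₀ : G.V} {X : FreeGroup G.E} (hX : X ≠ 1)
    {w w' : List G.Dir} (hred : FreeGroup.Red w w')
    (hw : G.IsWalk w ∧ G.wstart w = some x₀ ∧ G.wend w = some x₀ ∧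
      G.EdgeNeutral w ∧ FreeGroup.mk w = X) :
    G.IsWalk w' ∧ G.wstart w' = some x₀ ∧ G.wend w' = some x₀ ∧
      G.EdgeNeutral w' ∧ FreeGroup.mk w' = X := by
  induction hred with
  | refl => exact hw
  | tail _ hstep ih => exact G.step_preserve hX hstep ih

end MGraph

/-- If a graph has three pairwise distinct non-backtracking walks of the same
length `h` from `v` to `u`, then it has a nontrivial closed edge-neutral walk
of length at most `6h` whose reduction is nontrivial; consequently its abelian
girth is at most `6h`. -/
theorem ablGirth_le_six_h (G : MGraph) (v u : G.V) (h : ℕ)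
    (w₁ w₂ w₃ : List G.Dir)
    (hw₁ : G.IsWalk w₁ ∧ G.NonBack w₁ ∧ G.wstart w₁ = some v ∧
      G.wend w₁ = some u ∧ w₁.length = h)
    (hw₂ : G.IsWalk w₂ ∧ G.NonBack w₂ ∧ G.wstart w₂ = some v ∧
      G.wend w₂ = some u ∧ w₂.length = h)
    (hw₃ : G.IsWalk w₃ ∧ G.NonBack w₃ ∧ G.wstart w₃ = some v ∧
      G.wend w₃ = some u ∧ w₃.length = h)
    (h12 : w₁ ≠ w₂) (h13 : w₁ ≠ w₃) (h23 : w₂ ≠ w₃) :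
    (∃ ℓ : List G.Dir, G.IsWalk ℓ ∧ G.Closed ℓ ∧ G.EdgeNeutral ℓ ∧
      ℓ.length ≤ 6 * h ∧ ¬ Relation.ReflTransGen G.RStep ℓ []) ∧
      G.ablGirth ≤ ((6 * h : ℕ) : ℕ∞) := by
  classical
  obtain ⟨hw1w, hw1n, hw1s, hw1e, hw1l⟩ := hw₁
  obtain ⟨hw2w, hw2n, hw2s, hw2e, hw2l⟩ := hw₂
  obtain ⟨hw3w, hw3n, hw3s, hw3e, hw3l⟩ := hw₃
  letI : DecidableEq G.E := Classical.decEq G.E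
  have hne₁ : w₁ ≠ [] := by rintro rfl; simp [MGraph.wstart] at hw1s
  have hne₂ : w₂ ≠ [] := by rintro rfl; simp [MGraph.wstart] at hw2s
  have hne₃ : w₃ ≠ [] := by rintro rfl; simp [MGraph.wstart] at hw3s
  set ℓ₀ : List G.Dir := w₁ ++ (FreeGroup.invRev w₂ ++ (w₃ ++ (FreeGroup.invRev w₁ ++
    (w₂ ++ FreeGroup.invRev w₃)))) with hℓ₀
  -- endpoints of the inverted walks
  have hw1iw := G.isWalk_invRev hw1w
  have hw2iw := G.isWalk_invRev hw2w
  have hw3iw := G.isWalk_invRev hw3w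
  have hw1is : G.wstart (FreeGroup.invRev w₁) = some u := by rw [G.wstart_invRev]; exact hw1e
  have hw2is : G.wstart (FreeGroup.invRev w₂) = some u := by rw [G.wstart_invRev]; exact hw2e
  have hw3is : G.wstart (FreeGroup.invRev w₃) = some u := by rw [G.wstart_invRev]; exact hw3e
  have hw1ie : G.wend (FreeGroup.invRev w₁) = some v := by rw [G.wend_invRev]; exact hw1s
  have hw2ie : G.wend (FreeGroup.invRev w₂) = some v := by rw [G.wend_invRev]; exact hw2s
  have hw3ie : G.wend (FreeGroup.invRev w₃) = some v := by rw [G.wend_invRev]; exact hw3s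
  have hine₁ := AblAux.invRev_ne_nil hne₁
  have hine₂ := AblAux.invRev_ne_nil hne₂
  have hine₃ := AblAux.invRev_ne_nil hne₃
  -- assemble the walk from the right
  have hW56 : G.IsWalk (w₂ ++ FreeGroup.invRev w₃) := G.isWalk_append hw2w hw3iw hw2e hw3is
  have hW56s : G.wstart (w₂ ++ FreeGroup.invRev w₃) = some v := by
    rw [G.wstart_append _ hne₂]; exact hw2s
  have hW56e : G.wend (w₂ ++ FreeGroup.invRev w₃) = some v := by
    rw [G.wend_append _ hine₃]; exact hw3ie
  have hW456 : G.IsWalk (FreeGroup.invRev w₁ ++ (w₂ ++ FreeGroup.invRev w₃)) :=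
    G.isWalk_append hw1iw hW56 hw1ie hW56s
  have hW456ne : FreeGroup.invRev w₁ ++ (w₂ ++ FreeGroup.invRev w₃) ≠ [] := by
    intro hc; exact hine₁ (List.append_eq_nil_iff.1 hc).1
  have hW456s : G.wstart (FreeGroup.invRev w₁ ++ (w₂ ++ FreeGroup.invRev w₃)) = some u := by
    rw [G.wstart_append _ hine₁]; exact hw1is
  have hW456e : G.wend (FreeGroup.invRev w₁ ++ (w₂ ++ FreeGroup.invRev w₃)) = some v := by
    rw [G.wend_append _ (by intro hc; exact hne₂ (List.append_eq_nil_iff.1 hc).1)]; exact hW56e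
  have hW3456 : G.IsWalk (w₃ ++ (FreeGroup.invRev w₁ ++ (w₂ ++ FreeGroup.invRev w₃))) :=
    G.isWalk_append hw3w hW456 hw3e hW456s
  have hW3456ne : w₃ ++ (FreeGroup.invRev w₁ ++ (w₂ ++ FreeGroup.invRev w₃)) ≠ [] := by
    intro hc; exact hne₃ (List.append_eq_nil_iff.1 hc).1
  have hW3456s : G.wstart (w₃ ++ (FreeGroup.invRev w₁ ++ (w₂ ++ FreeGroup.invRev w₃)))
      = some v := by
    rw [G.wstart_append _ hne₃]; exact hw3s
  have hW3456e : G.wend (w₃ ++ (FreeGroup.invRev w₁ ++ (w₂ ++ FreeGroup.invRev w₃)))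
      = some v := by
    rw [G.wend_append _ hW456ne]; exact hW456e
  have hW23456 : G.IsWalk (FreeGroup.invRev w₂ ++ (w₃ ++ (FreeGroup.invRev w₁ ++
      (w₂ ++ FreeGroup.invRev w₃)))) :=
    G.isWalk_append hw2iw hW3456 hw2ie hW3456s
  have hW23456ne : FreeGroup.invRev w₂ ++ (w₃ ++ (FreeGroup.invRev w₁ ++
      (w₂ ++ FreeGroup.invRev w₃))) ≠ [] := by
    intro hc; exact hine₂ (List.append_eq_nil_iff.1 hc).1
  have hW23456s : G.wstart (FreeGroup.invRev w₂ ++ (w₃ ++ (FreeGroup.invRev w₁ ++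
      (w₂ ++ FreeGroup.invRev w₃)))) = some u := by
    rw [G.wstart_append _ hine₂]; exact hw2is
  have hW23456e : G.wend (FreeGroup.invRev w₂ ++ (w₃ ++ (FreeGroup.invRev w₁ ++
      (w₂ ++ FreeGroup.invRev w₃)))) = some v := by
    rw [G.wend_append _ hW3456ne]; exact hW3456e
  have hwalk : G.IsWalk ℓ₀ := G.isWalk_append hw1w hW23456 hw1e hW23456s
  have hstart : G.wstart ℓ₀ = some v := by
    rw [hℓ₀, G.wstart_append _ hne₁]; exact hw1s
  have hend : G.wend ℓ₀ = some v := by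
    rw [hℓ₀, G.wend_append _ hW23456ne]; exact hW23456e
  have hlen : ℓ₀.length = 6 * h := by
    rw [hℓ₀]
    simp only [List.length_append, FreeGroup.invRev_length, hw1l, hw2l, hw3l]
    omega
  have hneutral : G.EdgeNeutral ℓ₀ := by
    intro e
    rw [hℓ₀]
    simp only [G.cnt_append, G.cnt_invRev, Bool.not_true, Bool.not_false]
    omega
  -- reducedness of the three walks
  have hred1 : AblAux.Reduced w₁ := (G.nonback_iff_reduced w₁).1 hw1n
  have hred2 : AblAux.Reduced w₂ := (G.nonback_iff_reduced w₂).1 hw2n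
  have hred3 : AblAux.Reduced w₃ := (G.nonback_iff_reduced w₃).1 hw3n
  have htw1 : (FreeGroup.mk w₁).toWord = w₁ := by
    rw [FreeGroup.toWord_mk, AblAux.reduced_reduce_eq_self hred1]
  have htw2 : (FreeGroup.mk w₂).toWord = w₂ := by
    rw [FreeGroup.toWord_mk, AblAux.reduced_reduce_eq_self hred2]
  have htw3 : (FreeGroup.mk w₃).toWord = w₃ := by
    rw [FreeGroup.toWord_mk, AblAux.reduced_reduce_eq_self hred3]
  have hAB : FreeGroup.mk w₁ ≠ FreeGroup.mk w₂ := by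
    intro hc; exact h12 (by rw [← htw1, ← htw2, hc])
  have hAC : FreeGroup.mk w₁ ≠ FreeGroup.mk w₃ := by
    intro hc; exact h13 (by rw [← htw1, ← htw3, hc])
  have hBC : FreeGroup.mk w₂ ≠ FreeGroup.mk w₃ := by
    intro hc; exact h23 (by rw [← htw2, ← htw3, hc])
  have hmkeq : FreeGroup.mk ℓ₀ = FreeGroup.mk w₁ * (FreeGroup.mk w₂)⁻¹ * FreeGroup.mk w₃ *
      (FreeGroup.mk w₁)⁻¹ * FreeGroup.mk w₂ * (FreeGroup.mk w₃)⁻¹ := by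
    rw [hℓ₀]
    simp only [← FreeGroup.mul_mk, ← FreeGroup.inv_mk]
    group
  -- nontriviality of mk ℓ₀
  have hX : FreeGroup.mk ℓ₀ ≠ 1 := by
    intro hone
    rw [hmkeq] at hone
    set p := FreeGroup.mk w₁ * (FreeGroup.mk w₂)⁻¹ with hpdef
    set q := FreeGroup.mk w₁ * (FreeGroup.mk w₃)⁻¹ with hqdef
    have hrearr : p * q⁻¹ * p⁻¹ * q = FreeGroup.mk w₁ * (FreeGroup.mk w₂)⁻¹ *
        FreeGroup.mk w₃ * (FreeGroup.mk w₁)⁻¹ * FreeGroup.mk w₂ * (FreeGroup.mk w₃)⁻¹ := by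
      rw [hpdef, hqdef]
      group
    have hone' : p * q⁻¹ * p⁻¹ * q = 1 := hrearr.trans hone
    have hcomm : p * q = q * p := by
      have h2 : p * q⁻¹ = q⁻¹ * p := by
        calc p * q⁻¹ = p * q⁻¹ * p⁻¹ * q * (q⁻¹ * p) := by group
          _ = 1 * (q⁻¹ * p) := by rw [hone']
          _ = q⁻¹ * p := one_mul _
      calc p * q = q * (q⁻¹ * p) * q := by group
        _ = q * (p * q⁻¹) * q := by rw [h2]
        _ = q * p := by group
    obtain ⟨t, ⟨m, hm⟩, ⟨n, hn⟩⟩ := AblAux.exists_common_power p q hcomm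
    have hp1 : p ≠ 1 := by
      intro hc
      rw [hpdef, mul_inv_eq_one] at hc
      exact hAB hc
    have hq1 : q ≠ 1 := by
      intro hc
      rw [hqdef, mul_inv_eq_one] at hc
      exact hAC hc
    have hpq : p ≠ q := by
      intro hc
      rw [hpdef, hqdef] at hc
      have h1 := mul_left_cancel hc
      exact hBC (inv_injective h1)
    have ht1 : t ≠ 1 := by
      rintro rfl
      rw [one_zpow] at hm
      exact hp1 hm
    have hm0 : m ≠ 0 := by
      rintro rfl
      rw [zpow_zero] at hm
      exact hp1 hm
    have hn0 : n ≠ 0 := by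
      rintro rfl
      rw [zpow_zero] at hn
      exact hq1 hn
    have hmn : m ≠ n := by
      rintro rfl
      exact hpq (hm.trans hn.symm)
    have normA : FreeGroup.norm (t ^ (0 : ℤ) * FreeGroup.mk w₁) = h := by
      rw [zpow_zero, one_mul, AblAux.norm_mk_reduced hred1, hw1l]
    have hBeq : t ^ (-m) * FreeGroup.mk w₁ = FreeGroup.mk w₂ := by
      rw [zpow_neg, ← hm, hpdef]
      group
    have normB : FreeGroup.norm (t ^ (-m) * FreeGroup.mk w₁) = h := by
      rw [hBeq, AblAux.norm_mk_reduced hred2, hw2l]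
    have hCeq : t ^ (-n) * FreeGroup.mk w₁ = FreeGroup.mk w₃ := by
      rw [zpow_neg, ← hn, hqdef]
      group
    have normC : FreeGroup.norm (t ^ (-n) * FreeGroup.mk w₁) = h := by
      rw [hCeq, AblAux.norm_mk_reduced hred3, hw3l]
    exact AblAux.MAIN3 t (FreeGroup.mk w₁) ht1 0 (-m) (-n) (by omega) (by omega) (by omega)
      h normA normB normC
  -- the reduced witness
  have hredred : FreeGroup.Red ℓ₀ (FreeGroup.reduce ℓ₀) := FreeGroup.reduce.red
  have hmkℓ : FreeGroup.mk (FreeGroup.reduce ℓ₀) = FreeGroup.mk ℓ₀ := FreeGroup.reduce.self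
  have hXℓ : FreeGroup.mk (FreeGroup.reduce ℓ₀) ≠ 1 := by rw [hmkℓ]; exact hX
  obtain ⟨hLwalk, hLstart, hLend, hLneutral, -⟩ :=
    G.red_preserve hX hredred ⟨hwalk, hstart, hend, hneutral, rfl⟩
  have hLne : FreeGroup.reduce ℓ₀ ≠ [] := by
    intro hc
    apply hXℓ
    rw [hc]
    rfl
  have hLnb : G.NonBack (FreeGroup.reduce ℓ₀) :=
    (G.nonback_iff_reduced _).2 (AblAux.reduced_reduce ℓ₀)
  have hLlen : (FreeGroup.reduce ℓ₀).length ≤ 6 * h := by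
    have h1 := FreeGroup.Red.length_le hredred
    omega
  have hclosed : G.Closed (FreeGroup.reduce ℓ₀) := ⟨hLne, by rw [hLstart, hLend]⟩
  have hnored : ¬ Relation.ReflTransGen G.RStep (FreeGroup.reduce ℓ₀) [] := by
    intro hc
    have hr2 : FreeGroup.Red (FreeGroup.reduce ℓ₀) [] := (G.red_iff _ _).1 hc
    have h3 : FreeGroup.mk (FreeGroup.reduce ℓ₀) = FreeGroup.mk ([] : List G.Dir) :=
      FreeGroup.Red.exact.2 ⟨[], hr2, FreeGroup.Red.refl⟩
    exact hXℓ (by rw [h3]; rfl)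
  constructor
  · exact ⟨FreeGroup.reduce ℓ₀, hLwalk, hclosed, hLneutral, hLlen, hnored⟩
  · have hmem : (((FreeGroup.reduce ℓ₀).length : ℕ∞)) ∈ {n : ℕ∞ | ∃ w : List G.Dir,
        G.IsWalk w ∧ G.NonBack w ∧ G.Closed w ∧ G.EdgeNeutral w ∧ n = w.length} :=
      ⟨FreeGroup.reduce ℓ₀, hLwalk, hLnb, hclosed, hLneutral, rfl⟩
    have hle1 : G.ablGirth ≤ (((FreeGroup.reduce ℓ₀).length : ℕ∞)) := sInf_le hmem
    have hle2 : (((FreeGroup.reduce ℓ₀).length : ℕ∞)) ≤ ((6 * h : ℕ) : ℕ∞) := by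
      exact_mod_cast hLlen
    exact le_trans hle1 hle2
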